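/- Let h_t be exponential with rate 1 and h_u be Gamma(m_L, m_L) distributed (density m_L^{m_L} g^{m_L−1} e^{−m_L g}/Γ(m_L)), independent. Then for ρ, τ, σ², γ > 0, P[h_t ρ/(h_u τ + σ²) > γ] = (m_L^{m_L}/(γτ/ρ + m_L)^{m_L}) · exp(−γσ²/ρ). -/

import Mathlib

open Real MeasureTheory Set ProbabilityTheory

lemma expMeasure_Ioi {t : ℝ} (ht : 0 ≤ t) :
    expMeasure 1 (Ioi t) = ENNReal.ofReal (Real.exp (-t)) := by
  have hP : IsProbabilityMeasure (expMeasure 1) := isProbabilityMeasure_expMeasure one_pos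
  have hIic : expMeasure 1 (Iic t) = ENNReal.ofReal (1 - Real.exp (-t)) := by
    have : expMeasure 1 (Iic t) = ∫⁻ y in Iic t, exponentialPDF 1 y := by
      rw [expMeasure, gammaMeasure, withDensity_apply _ measurableSet_Iic]
      rfl
    rw [this, lintegral_exponentialPDF_eq_antiDeriv one_pos, if_pos ht, one_mul]
  have : Ioi t = (Iic t)ᶜ := by simp
  rw [this, prob_compl_eq_one_sub measurableSet_Iic, hIic]
  have h1 : Real.exp (-t) ≤ 1 := by
    rw [Real.exp_le_one_iff]; linarith
  rw [← ENNReal.ofReal_one, ← ENNReal.ofReal_sub _ (by linarith)]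
  norm_num

lemma gammaMeasure_neg (a r : ℝ) : gammaMeasure a r (Iio 0) = 0 := by
  rw [gammaMeasure, withDensity_apply _ measurableSet_Iio]
  exact lintegral_gammaPDF_of_nonpos le_rfl

theorem sinr_coverage_nakagami {Ω : Type*} [MeasureSpace Ω] [IsProbabilityMeasure (ℙ : Measure Ω)]
    (ht hu : Ω → ℝ) (hmeas_t : Measurable ht) (hmeas_u : Measurable hu)
    (hindep : IndepFun ht hu) (hdist_t : Measure.map ht ℙ = expMeasure 1)
    (mL : ℝ) (hmL : 0 < mL) (hdist_u : Measure.map hu ℙ = gammaMeasure mL mL)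
    (ρ τ σ2 γ : ℝ) (hρ : 0 < ρ) (hτ : 0 < τ) (hσ : 0 < σ2) (hγ : 0 < γ) :
    ℙ {ω | γ < ht ω * ρ / (hu ω * τ + σ2)}
      = ENNReal.ofReal ((mL ^ mL / (γ * τ / ρ + mL) ^ mL) * Real.exp (-(γ * σ2 / ρ))) := by
  set a : ℝ := γ * τ / ρ with ha_def
  set c : ℝ := γ * σ2 / ρ with hc_def
  have ha : 0 < a := by positivity
  have hc : 0 < c := by positivity
  -- the event in terms of the pair (ht, hu)
  set S : Set (ℝ × ℝ) := {p : ℝ × ℝ | γ * (p.2 * τ + σ2) / ρ < p.1} with hS_def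
  have hSm : MeasurableSet S := by
    apply measurableSet_lt
    · exact (((measurable_snd.mul_const τ).add_const σ2).const_mul γ).div_const ρ
    · exact measurable_fst
  -- hu is a.s. nonnegative
  have hu_nonneg : ∀ᵐ ω ∂(ℙ : Measure Ω), 0 ≤ hu ω := by
    rw [ae_iff]
    have : {ω | ¬ 0 ≤ hu ω} = hu ⁻¹' (Iio 0) := by
      ext ω; simp [not_le]
    rw [this, ← Measure.map_apply hmeas_u measurableSet_Iio, hdist_u, gammaMeasure_neg]
  -- rewrite the event a.e.
  have hevent : ℙ {ω | γ < ht ω * ρ / (hu ω * τ + σ2)}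
      = ℙ ((fun ω => (ht ω, hu ω)) ⁻¹' S) := by
    apply measure_congr
    filter_upwards [hu_nonneg] with ω hω
    have hd : 0 < hu ω * τ + σ2 := by positivity
    have : (γ < ht ω * ρ / (hu ω * τ + σ2)) ↔ γ * (hu ω * τ + σ2) / ρ < ht ω := by
      rw [lt_div_iff₀ hd, div_lt_iff₀ hρ]
    simp only [eq_iff_iff, mem_setOf_eq, mem_preimage, hS_def]
    exact this
  rw [hevent]
  -- use independence to pass to the product measure
  have hmap : Measure.map (fun ω => (ht ω, hu ω)) ℙ
      = (Measure.map ht ℙ).prod (Measure.map hu ℙ) :=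
    (indepFun_iff_map_prod_eq_prod_map_map hmeas_t.aemeasurable
      hmeas_u.aemeasurable).mp hindep
  have hPe : IsProbabilityMeasure (expMeasure 1) := isProbabilityMeasure_expMeasure one_pos
  have hPg : IsProbabilityMeasure (gammaMeasure mL mL) := isProbabilityMeasure_gammaMeasure hmL hmL
  rw [← Measure.map_apply (hmeas_t.prodMk hmeas_u) hSm, hmap, hdist_t, hdist_u,
    Measure.prod_apply_symm hSm]
  -- slice: for each y, the slice is Ioi (γ*(y*τ+σ2)/ρ)
  have hslice : ∀ y : ℝ, (fun x => (x, y)) ⁻¹' S = Ioi (γ * (y * τ + σ2) / ρ) := by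
    intro y; ext x; simp [hS_def]
  have hgamma_ae : ∀ᵐ y ∂(gammaMeasure mL mL), 0 ≤ y := by
    rw [ae_iff]
    have : {y : ℝ | ¬ 0 ≤ y} = Iio 0 := by ext y; simp [not_le]
    rw [this, gammaMeasure_neg]
  have h1 : ∫⁻ y, expMeasure 1 ((fun x => (x, y)) ⁻¹' S) ∂(gammaMeasure mL mL)
      = ∫⁻ y, ENNReal.ofReal (Real.exp (-(γ * (y * τ + σ2) / ρ))) ∂(gammaMeasure mL mL) := by
    apply lintegral_congr_ae
    filter_upwards [hgamma_ae] with y hy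
    rw [hslice y, expMeasure_Ioi (by positivity)]
  have hm1 : Measurable (gammaPDF mL mL) := (measurable_gammaPDFReal mL mL).ennreal_ofReal
  have hm2 : Measurable (gammaPDF mL (a + mL)) :=
    (measurable_gammaPDFReal mL (a + mL)).ennreal_ofReal
  rw [h1, gammaMeasure, lintegral_withDensity_eq_lintegral_mul _ hm1 (by measurability)]
  have key : ∀ y : ℝ,
      (gammaPDF mL mL * fun y => ENNReal.ofReal (Real.exp (-(γ * (y * τ + σ2) / ρ)))) y
      = ENNReal.ofReal (mL ^ mL / (a + mL) ^ mL * Real.exp (-c)) * gammaPDF mL (a + mL) y := by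
    intro y
    simp only [Pi.mul_apply]
    rcases lt_or_ge y 0 with hy | hy
    · rw [gammaPDF_of_neg hy, gammaPDF_of_neg hy, zero_mul, mul_zero]
    · rw [gammaPDF_of_nonneg hy, gammaPDF_of_nonneg hy,
        ← ENNReal.ofReal_mul (by positivity), ← ENNReal.ofReal_mul (by positivity)]
      congr 1
      have hΓ : Real.Gamma mL ≠ 0 := (Real.Gamma_pos_of_pos hmL).ne'
      have haml : (0:ℝ) < (a + mL) ^ mL := Real.rpow_pos_of_pos (by linarith) mL
      have hexp : γ * (y * τ + σ2) / ρ = a * y + c := by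
        rw [ha_def, hc_def]; ring
      rw [hexp]
      have hE : Real.exp (-(mL * y)) * Real.exp (-(a * y + c))
          = Real.exp (-((a + mL) * y)) * Real.exp (-c) := by
        rw [← Real.exp_add, ← Real.exp_add]; ring_nf
      calc mL ^ mL / Gamma mL * y ^ (mL - 1) * rexp (-(mL * y)) * rexp (-(a * y + c))
          = mL ^ mL / Gamma mL * y ^ (mL - 1) * (rexp (-(mL * y)) * rexp (-(a * y + c))) := by
            ring
        _ = mL ^ mL / Gamma mL * y ^ (mL - 1) * (rexp (-((a + mL) * y)) * rexp (-c)) := by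
            rw [hE]
        _ = mL ^ mL / (a + mL) ^ mL * rexp (-c)
              * ((a + mL) ^ mL / Gamma mL * y ^ (mL - 1) * rexp (-((a + mL) * y))) := by
            field_simp
  rw [lintegral_congr key, lintegral_const_mul _ hm2,
    lintegral_gammaPDF_eq_one hmL (by linarith), mul_one]
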